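/- Let n ≥ 1, let u : ℝⁿ → ℝ be twice continuously differentiable, and let α : ℝⁿ → ℝ be continuous with α ≥ 0. If Δu(x) = α(x)·u(x) for all x ∈ ℝⁿ (Δ the Euclidean Laplacian) and u(x) → 0 as ‖x‖ → ∞, then u ≡ 0. In other words, the operator Δ − α has trivial kernel among C² functions decaying at infinity. -/

import Mathlib

open Filter

/-- The flat Euclidean Laplacian `Δu = Σ_{i=1}^{n} ∂²u/∂x_i²` on `ℝⁿ`. -/
noncomputable def euclideanLaplacian (n : ℕ) (u : EuclideanSpace ℝ (Fin n) → ℝ)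
    (x : EuclideanSpace ℝ (Fin n)) : ℝ :=
  ∑ i : Fin n,
    iteratedFDeriv ℝ 2 u x ![EuclideanSpace.single i 1, EuclideanSpace.single i 1]

open Set Metric
open scoped RealInnerProductSpace Topology

/-- One-dimensional second derivative test at a local maximum. -/
lemma aux_secondDeriv_nonpos_of_isLocalMax {g g' : ℝ → ℝ} {c : ℝ}
    (hg : ∀ t, HasDerivAt g (g' t) t) (hg' : HasDerivAt g' c 0)
    (hmax : IsLocalMax g 0) : c ≤ 0 := by
  by_contra hc
  push_neg at hc
  have hg'0 : g' 0 = 0 := by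
    have h := hmax.deriv_eq_zero
    rwa [(hg 0).deriv] at h
  have hslope : Tendsto (slope g' 0) (𝓝[≠] (0:ℝ)) (𝓝 c) :=
    hasDerivAt_iff_tendsto_slope.mp hg'
  have hev : ∀ᶠ t in 𝓝[≠] (0:ℝ), 0 < slope g' 0 t := hslope.eventually_const_lt hc
  have hev' : ∀ᶠ t in 𝓝[>] (0:ℝ), 0 < g' t := by
    have h1 : 𝓝[>] (0:ℝ) ≤ 𝓝[≠] (0:ℝ) :=
      nhdsWithin_mono _ (fun t ht => ne_of_gt ht)
    filter_upwards [hev.filter_mono h1, self_mem_nhdsWithin] with t ht ht0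
    have hs : slope g' 0 t = g' t / t := by
      rw [slope_def_field, hg'0, sub_zero, sub_zero]
    rw [hs] at ht
    rcases div_pos_iff.mp ht with ⟨h, _⟩ | ⟨_, h⟩
    · exact h
    · exact absurd ht0 (not_lt.mpr h.le)
  obtain ⟨δ, hδ, hδsub⟩ := mem_nhdsGT_iff_exists_Ioo_subset.mp hev'
  have hmax' : ∀ᶠ t in 𝓝[>] (0:ℝ), g t ≤ g 0 := hmax.filter_mono nhdsWithin_le_nhds
  have hIoo : Ioo (0:ℝ) δ ∈ 𝓝[>] (0:ℝ) := Ioo_mem_nhdsGT hδ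
  obtain ⟨t, htle, ht⟩ := (hmax'.and (eventually_of_mem hIoo fun x hx => hx)).exists
  have hmono : StrictMonoOn g (Icc 0 t) := by
    apply strictMonoOn_of_deriv_pos (convex_Icc 0 t)
    · exact (continuous_iff_continuousAt.mpr fun s => (hg s).continuousAt).continuousOn
    · intro s hs
      rw [interior_Icc] at hs
      rw [(hg s).deriv]
      exact hδsub ⟨hs.1, hs.2.trans ht.2⟩
  have hlt : g 0 < g t :=
    hmono (left_mem_Icc.mpr ht.1.le) (right_mem_Icc.mpr ht.1.le) ht.1
  linarith

/-- At a local maximum of `u + ε‖·‖²`, the pure second directional derivative of `u`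
along a unit vector `v` is at most `-2ε`. -/
lemma aux_dirDeriv_le {E : Type*} [NormedAddCommGroup E] [InnerProductSpace ℝ E]
    {u : E → ℝ} (hu : ContDiff ℝ 2 u) {ε : ℝ} {p v : E} (hv : ‖v‖ = 1)
    (hmax : IsLocalMax (fun x => u x + ε * ‖x‖ ^ 2) p) :
    iteratedFDeriv ℝ 2 u p ![v, v] + 2 * ε ≤ 0 := by
  have hud : Differentiable ℝ u := hu.differentiable two_ne_zero
  have hline : ∀ t : ℝ, HasDerivAt (fun s : ℝ => p + s • v) v t := fun t => by
    simpa using ((hasDerivAt_id t).smul_const v).const_add p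
  have hg : ∀ t : ℝ, HasDerivAt (fun s : ℝ => u (p + s • v)) (fderiv ℝ u (p + t • v) v) t :=
    fun t => ((hud (p + t • v)).hasFDerivAt).comp_hasDerivAt t (hline t)
  set D := fderiv ℝ (fderiv ℝ u) p with hD
  have hDu : DifferentiableAt ℝ (fderiv ℝ u) p := by
    have h1 : ContDiff ℝ 1 (fderiv ℝ u) := hu.fderiv_right (le_refl 2)
    exact (h1.differentiable one_ne_zero) p
  have hF : HasFDerivAt (fun y => fderiv ℝ u y v)
      ((ContinuousLinearMap.apply ℝ ℝ v).comp D) p :=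
    (ContinuousLinearMap.apply ℝ ℝ v).hasFDerivAt.comp p hDu.hasFDerivAt
  have hg' : HasDerivAt (fun t : ℝ => fderiv ℝ u (p + t • v) v) (D v v) 0 := by
    have h0 : p = p + (0:ℝ) • v := by simp
    exact hF.comp_hasDerivAt_of_eq 0 (hline 0) h0
  set c := (⟪p, v⟫ : ℝ) with hcdef
  have hnorm : ∀ t : ℝ, ‖p + t • v‖ ^ 2 = ‖p‖ ^ 2 + 2 * t * c + t ^ 2 := by
    intro t
    rw [norm_add_sq_real, real_inner_smul_right, norm_smul, hv, mul_one,
      Real.norm_eq_abs, sq_abs]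
    ring
  have hq : ∀ t : ℝ, HasDerivAt (fun s : ℝ => ε * ‖p + s • v‖ ^ 2)
      (ε * (2 * c + 2 * t)) t := by
    intro t
    have h2 : HasDerivAt (fun s : ℝ => 2 * s * c) (2 * c) t := by
      simpa using (((hasDerivAt_id t).const_mul 2).mul_const c)
    have h3 : HasDerivAt (fun s : ℝ => s ^ 2) (2 * t) t := by
      simpa using hasDerivAt_pow 2 t
    have ha : HasDerivAt (fun s : ℝ => ‖p‖ ^ 2 + 2 * s * c + s ^ 2) (2 * c + 2 * t) t :=
      (h2.const_add (‖p‖ ^ 2)).add h3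
    have h1 : HasDerivAt (fun s : ℝ => ε * (‖p‖ ^ 2 + 2 * s * c + s ^ 2))
        (ε * (2 * c + 2 * t)) t := ha.const_mul ε
    exact h1.congr_of_eventuallyEq (Eventually.of_forall fun s => by show ε * ‖p + s • v‖ ^ 2 = _; rw [hnorm s])
  have hφ : ∀ t : ℝ, HasDerivAt (fun s : ℝ => u (p + s • v) + ε * ‖p + s • v‖ ^ 2)
      (fderiv ℝ u (p + t • v) v + ε * (2 * c + 2 * t)) t := fun t => (hg t).add (hq t)
  have hq' : HasDerivAt (fun t : ℝ => ε * (2 * c + 2 * t)) (ε * 2) 0 := by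
    have h4 : HasDerivAt (fun t : ℝ => 2 * t) (2:ℝ) 0 := by
      simpa using (hasDerivAt_id (0:ℝ)).const_mul 2
    simpa using (h4.const_add (2 * c)).const_mul ε
  have hlocmax : IsLocalMax (fun s : ℝ => u (p + s • v) + ε * ‖p + s • v‖ ^ 2) 0 := by
    have h0 : p = p + (0:ℝ) • v := by simp
    rw [h0] at hmax
    exact IsLocalMax.comp_continuous (g := fun s : ℝ => p + s • v) (b := (0:ℝ)) hmax
      (hline 0).continuousAt
  have hle : D v v + ε * 2 ≤ 0 :=
    aux_secondDeriv_nonpos_of_isLocalMax hφ (hg'.add hq') hlocmax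
  have hit : iteratedFDeriv ℝ 2 u p ![v, v] = D v v := by
    rw [iteratedFDeriv_two_apply, hD]
    simp
  linarith

lemma aux_key (n : ℕ) (hn : 1 ≤ n)
    (u : EuclideanSpace ℝ (Fin n) → ℝ) (hu : ContDiff ℝ 2 u)
    (α : EuclideanSpace ℝ (Fin n) → ℝ) (hα0 : ∀ x, 0 ≤ α x)
    (heq : ∀ x, euclideanLaplacian n u x = α x * u x)
    (hdecay : Tendsto u (comap (fun x : EuclideanSpace ℝ (Fin n) => ‖x‖) atTop) (nhds 0)) :
    ∀ x, u x ≤ 0 := by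
  by_contra h
  push_neg at h
  obtain ⟨x₀, hx₀⟩ := h
  set c := u x₀ with hc
  have hcpos : 0 < c := hx₀
  have hdec : ∃ R : ℝ, ∀ x, R ≤ ‖x‖ → |u x| < c / 2 := by
    have hb : Metric.ball (0:ℝ) (c / 2) ∈ 𝓝 (0:ℝ) := Metric.ball_mem_nhds 0 (by positivity)
    have h1 := hdecay hb
    rw [mem_map, mem_comap] at h1
    obtain ⟨S, hS, hsub⟩ := h1
    obtain ⟨R, hR⟩ := mem_atTop_sets.mp hS
    refine ⟨R, fun x hx => ?_⟩
    have hx2 : u x ∈ Metric.ball (0:ℝ) (c / 2) := hsub (hR _ hx)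
    simpa [Real.dist_eq] using hx2
  obtain ⟨R₀, hR₀⟩ := hdec
  set R := max R₀ (‖x₀‖ + 1) with hRdef
  have hRge : ‖x₀‖ + 1 ≤ R := le_max_right _ _
  have hRpos : 0 < R := lt_of_lt_of_le (by positivity) hRge
  have hx₀R : ‖x₀‖ < R := lt_of_lt_of_le (lt_add_one _) hRge
  set ε := c / (8 * R ^ 2) with hεdef
  have hεpos : 0 < ε := by positivity
  have hεR : ε * R ^ 2 = c / 8 := by
    rw [hεdef]; field_simp
  set G := fun x : EuclideanSpace ℝ (Fin n) => u x + ε * ‖x‖ ^ 2 with hGdef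
  have hGx : ∀ x, G x = u x + ε * ‖x‖ ^ 2 := fun _ => rfl
  have hGcont : Continuous G :=
    hu.continuous.add (continuous_const.mul (continuous_norm.pow 2))
  obtain ⟨p, hpmem, hpmax⟩ :=
    (isCompact_closedBall (0 : EuclideanSpace ℝ (Fin n)) R).exists_isMaxOn
      ⟨x₀, by simpa [mem_closedBall_zero_iff] using hx₀R.le⟩ hGcont.continuousOn
  have hpR : ‖p‖ ≤ R := by simpa [mem_closedBall_zero_iff] using hpmem
  have hGx₀ : c ≤ G x₀ := by
    have h0 : 0 ≤ ε * ‖x₀‖ ^ 2 := by positivity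
    rw [hGx, ← hc]
    linarith
  have hGp : G x₀ ≤ G p := hpmax (by simpa [mem_closedBall_zero_iff] using hx₀R.le)
  have hεp : ε * ‖p‖ ^ 2 ≤ c / 8 := by
    rw [← hεR]
    have h1 : ‖p‖ ^ 2 ≤ R ^ 2 := by nlinarith [norm_nonneg p]
    nlinarith
  rcases lt_or_eq_of_le hpR with hlt | heqR
  · -- interior maximum
    have hcp : c ≤ u p + ε * ‖p‖ ^ 2 := by
      have := le_trans hGx₀ hGp
      rwa [hGx] at this
    have hup : 0 < u p := by linarith
    have hloc : IsLocalMax G p :=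
      hpmax.isLocalMax (Filter.mem_of_superset
        (Metric.isOpen_ball.mem_nhds (by simpa [mem_ball_zero_iff] using hlt))
        Metric.ball_subset_closedBall)
    have hsum : ∀ i : Fin n,
        iteratedFDeriv ℝ 2 u p ![EuclideanSpace.single i 1, EuclideanSpace.single i 1]
          + 2 * ε ≤ 0 := fun i =>
      aux_dirDeriv_le hu (by simp [EuclideanSpace.norm_single]) hloc
    have hΔ : euclideanLaplacian n u p + (n : ℝ) * (2 * ε) ≤ 0 := by
      have h1 := Finset.sum_le_sum (fun i (_ : i ∈ Finset.univ) => hsum i)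
      rw [Finset.sum_add_distrib, Finset.sum_const, Finset.card_univ] at h1
      simpa [euclideanLaplacian, nsmul_eq_mul] using h1
    have h0 : 0 ≤ euclideanLaplacian n u p := by
      rw [heq p]
      exact mul_nonneg (hα0 p) hup.le
    have hn1 : (1:ℝ) ≤ (n:ℝ) := by exact_mod_cast hn
    nlinarith
  · -- boundary maximum
    have hub : |u p| < c / 2 := hR₀ p (by rw [heqR]; exact le_max_left _ _)
    have hup : u p < c / 2 := lt_of_le_of_lt (le_abs_self _) hub
    have hGple : G p < c / 2 + c / 8 := by
      rw [hGx]
      linarith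
    have h5 : c < c / 2 + c / 8 := lt_of_le_of_lt (le_trans hGx₀ hGp) hGple
    linarith

/-- Triviality of the kernel of `Δ − α` for continuous `α ≥ 0`:
if `u ∈ C²(ℝⁿ)` satisfies `Δu = α·u` everywhere and `u(x) → 0` as `‖x‖ → ∞`,
then `u ≡ 0`. -/
theorem kernel_trivial (n : ℕ) (hn : 1 ≤ n)
    (u : EuclideanSpace ℝ (Fin n) → ℝ) (hu : ContDiff ℝ 2 u)
    (α : EuclideanSpace ℝ (Fin n) → ℝ) (hα : Continuous α) (hα0 : ∀ x, 0 ≤ α x)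
    (heq : ∀ x, euclideanLaplacian n u x = α x * u x)
    (hdecay : Tendsto u (comap (fun x : EuclideanSpace ℝ (Fin n) => ‖x‖) atTop) (nhds 0)) :
    ∀ x, u x = 0 := by
  have h1 := aux_key n hn u hu α hα0 heq hdecay
  have hneg : ∀ x, euclideanLaplacian n (-u) x = α x * (-u) x := by
    intro x
    unfold euclideanLaplacian
    simp only [iteratedFDeriv_neg_apply, ContinuousMultilinearMap.neg_apply,
      Finset.sum_neg_distrib, Pi.neg_apply]
    have h := heq x
    unfold euclideanLaplacian at h
    rw [h]
    ring
  have hdecay' : Tendsto (-u) (comap (fun x : EuclideanSpace ℝ (Fin n) => ‖x‖) atTop)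
      (nhds 0) := by simpa [Pi.neg_def] using hdecay.neg
  have h2 := aux_key n hn (-u) hu.neg α hα0 hneg hdecay'
  intro x
  have ha := h1 x
  have hb := h2 x
  simp only [Pi.neg_apply] at hb
  linarith
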